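/- Let G be a Hausdorff topological group and T₁, T₂, T₃ ⊆ G each locally cofinite at 0. Let g ∈ T₁ + T₂ + T₃ with g ≠ 0 and g ∉ T₁ ∪ T₂ ∪ T₃. Then g has only finitely many representations: the set {(g₁, g₂, g₃) ∈ T₁ × T₂ × T₃ : g₁ + g₂ + g₃ = g} is finite. -/

import Mathlib

open Pointwise


def LCF0 {G : Type*} [AddGroup G] [TopologicalSpace G] (T : Set G) : Prop :=
  (0 : G) ∉ T ∧ ∀ u : Set G, IsOpen u → (0 : G) ∈ u → (T \ u).Finite

/-- Key two-variable lemma: if `φ` is a continuous injection with `φ 0 ≠ 0`,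
then only finitely many `a ∈ T` have `φ a ∈ T'`. -/
lemma LCF0.key {G : Type*} [AddGroup G] [TopologicalSpace G] [T2Space G]
    {T T' : Set G} (h : LCF0 T) (h' : LCF0 T') (φ : G → G)
    (hc : Continuous φ) (hi : Function.Injective φ) (h0 : φ 0 ≠ 0) :
    {a ∈ T | φ a ∈ T'}.Finite := by
  obtain ⟨W, u, hWo, huo, hkW, h0u, hd⟩ := t2_separation h0
  have hvo : IsOpen (φ ⁻¹' W) := hWo.preimage hc
  have hfin1 := h.2 _ hvo hkW
  have hfin2 : (φ ⁻¹' (T' \ u)).Finite := (h'.2 u huo h0u).preimage hi.injOn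
  apply (hfin1.union hfin2).subset
  rintro a ⟨haT, haT'⟩
  by_cases hav : a ∈ φ ⁻¹' W
  · exact Or.inr ⟨haT', fun hu' => Set.disjoint_left.mp hd hav hu'⟩
  · exact Or.inl ⟨haT, hav⟩

theorem stmt_8 {G : Type*} [AddGroup G] [TopologicalSpace G] [IsTopologicalAddGroup G]
    [T2Space G] (T₁ T₂ T₃ : Set G) (h₁ : LCF0 T₁) (h₂ : LCF0 T₂) (h₃ : LCF0 T₃)
    (g : G) (hg : ∃ g₁ ∈ T₁, ∃ g₂ ∈ T₂, ∃ g₃ ∈ T₃, g₁ + g₂ + g₃ = g)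
    (hg0 : g ≠ 0) (hgT : g ∉ T₁ ∪ T₂ ∪ T₃) :
    {p : G × G × G | p.1 ∈ T₁ ∧ p.2.1 ∈ T₂ ∧ p.2.2 ∈ T₃ ∧
      p.1 + p.2.1 + p.2.2 = g}.Finite := by
  have hgT1 : g ∉ T₁ := fun h => hgT (Or.inl (Or.inl h))
  have hgT2 : g ∉ T₂ := fun h => hgT (Or.inl (Or.inr h))
  have hgT3 : g ∉ T₃ := fun h => hgT (Or.inr h)
  -- choose an open nbhd u of 0 with g ∉ u + u + u
  have hgc : ({g}ᶜ : Set G) ∈ nhds (0 : G) :=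
    (isOpen_compl_singleton).mem_nhds (by simpa using (Ne.symm hg0))
  obtain ⟨V, hVo, h0V, hVV⟩ := exists_open_nhds_zero_add_subset hgc
  obtain ⟨u, huo, h0u, huu⟩ := exists_open_nhds_zero_add_subset (hVo.mem_nhds h0V)
  have huV : u ⊆ V := fun x hx => by simpa using huu (Set.add_mem_add hx h0u)
  have hsum3 : ∀ x ∈ u, ∀ y ∈ u, ∀ z ∈ u, x + y + z ≠ g := by
    intro x hx y hy z hz
    have : x + y + z ∈ V + V := by
      rw [add_assoc]
      exact Set.add_mem_add (huV hx) (huu (Set.add_mem_add hy hz))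
    exact fun hEq => (hVV this) (by simp [hEq])
  have hF1 : (T₁ \ u).Finite := h₁.2 u huo h0u
  have hF2 : (T₂ \ u).Finite := h₂.2 u huo h0u
  have hF3 : (T₃ \ u).Finite := h₃.2 u huo h0u
  -- the finite sets from the key lemma
  have hA : ∀ a ∈ T₁, {b ∈ T₂ | -b + (-a + g) ∈ T₃}.Finite := by
    intro a ha
    refine h₂.key h₃ (fun b => -b + (-a + g)) (by continuity)
      (fun x y hxy => by simpa using hxy) ?_
    simp only [neg_zero, zero_add]
    intro hEq
    exact hgT1 (by rw [neg_add_eq_zero] at hEq; rw [← hEq]; exact ha)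
  have hB : ∀ b ∈ T₂, {a ∈ T₁ | -(a + b) + g ∈ T₃}.Finite := by
    intro b hb
    refine h₁.key h₃ (fun a => -(a + b) + g) (by continuity)
      (fun x y hxy => by simpa using hxy) ?_
    simp only [zero_add]
    intro hEq
    exact hgT2 (by rw [neg_add_eq_zero] at hEq; rw [← hEq]; exact hb)
  have hC : ∀ c ∈ T₃, {a ∈ T₁ | -a + (g + -c) ∈ T₂}.Finite := by
    intro c hc
    refine h₁.key h₂ (fun a => -a + (g + -c)) (by continuity)
      (fun x y hxy => by simpa using hxy) ?_
    simp only [neg_zero, zero_add]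
    intro hEq
    have : g = c := by
      have := congrArg (· + c) hEq
      simpa [add_assoc] using this
    exact hgT3 (this ▸ hc)
  set A : Set G := ⋃ a ∈ T₁ \ u, {b ∈ T₂ | -b + (-a + g) ∈ T₃} with hAdef
  set B : Set G := ⋃ b ∈ T₂ \ u, {a ∈ T₁ | -(a + b) + g ∈ T₃} with hBdef
  set C : Set G := ⋃ c ∈ T₃ \ u, {a ∈ T₁ | -a + (g + -c) ∈ T₂} with hCdef
  have hAfin : A.Finite := hF1.biUnion fun a ha => hA a ha.1
  have hBfin : B.Finite := hF2.biUnion fun b hb => hB b hb.1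
  have hCfin : C.Finite := hF3.biUnion fun c hc => hC c hc.1
  have hE1 : (((T₁ \ u) ×ˢ A).image (fun q : G × G => (q.1, q.2, -(q.1 + q.2) + g))).Finite :=
    (hF1.prod hAfin).image _
  have hE2 : ((B ×ˢ (T₂ \ u)).image (fun q : G × G => (q.1, q.2, -(q.1 + q.2) + g))).Finite :=
    (hBfin.prod hF2).image _
  have hE3 : ((C ×ˢ (T₃ \ u)).image (fun q : G × G => (q.1, -q.1 + (g + -q.2), q.2))).Finite :=
    (hCfin.prod hF3).image _
  apply ((hE1.union hE2).union hE3).subset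
  rintro ⟨a, b, c⟩ ⟨ha, hb, hc, habc⟩
  have hceq : c = -(a + b) + g := by rw [← habc]; simp [add_assoc]
  have hbeq : b = -a + (g + -c) := by rw [← habc]; simp [add_assoc]
  by_cases hau : a ∈ u
  · by_cases hbu : b ∈ u
    · by_cases hcu : c ∈ u
      · exact absurd habc (hsum3 a hau b hbu c hcu)
      · -- case 3 : c ∉ u
        refine Or.inr ⟨(a, c), ⟨?_, ⟨hc, hcu⟩⟩, ?_⟩
        · exact Set.mem_biUnion ⟨hc, hcu⟩ ⟨ha, by rw [← hbeq]; exact hb⟩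
        · show (a, -a + (g + -c), c) = (a, b, c)
          rw [← hbeq]
    · -- case 2 : b ∉ u
      refine Or.inl (Or.inr ⟨(a, b), ⟨?_, ⟨hb, hbu⟩⟩, ?_⟩)
      · exact Set.mem_biUnion ⟨hb, hbu⟩ ⟨ha, by rw [← hceq]; exact hc⟩
      · show (a, b, -(a + b) + g) = (a, b, c)
        rw [← hceq]
  · -- case 1 : a ∉ u
    refine Or.inl (Or.inl ⟨(a, b), ⟨⟨ha, hau⟩, ?_⟩, ?_⟩)
    · refine Set.mem_biUnion ⟨ha, hau⟩ ⟨hb, ?_⟩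
      have : -b + (-a + g) = c := by rw [← habc]; simp [add_assoc]
      rw [this]; exact hc
    · show (a, b, -(a + b) + g) = (a, b, c)
      rw [← hceq]
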